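/- The group π = S_3 *_{Z/2Z} S_3 is indecomposable as a free product: if π ≅ G * H for groups G and H, then G or H is trivial. -/

import Mathlib

open Monoid

section FreeProductLemmas

open CoprodI

variable {ι : Type*} {G : ι → Type*} [∀ i, Group (G i)]



theorem word_prod_injective : Function.Injective (Word.prod : Word G → CoprodI G) := by
  classical
  exact Function.LeftInverse.injective (g := Word.equiv) Word.equiv.right_inv

theorem neword_prod_ne_one {i j} (w : NeWord G i j) : w.prod ≠ 1 := by
  intro h
  have : w.toWord = Word.empty := word_prod_injective (by simpa [NeWord.prod] using h)
  exact w.toList_ne_nil (by simpa [NeWord.toWord] using congrArg Word.toList this)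

theorem pow_neword {i j} (hij : j ≠ i) (w : NeWord G i j) (n : ℕ) :
    ∃ v : NeWord G i j, v.prod = w.prod ^ (n + 1) := by
  induction n with
  | zero => exact ⟨w, by simp⟩
  | succ n ih =>
    obtain ⟨v, hv⟩ := ih
    exact ⟨NeWord.append w hij v, by rw [NeWord.append_prod, hv, ← pow_succ']⟩

theorem not_isOfFinOrder_conj_neword {i j} (hij : i ≠ j) (w : NeWord G i j) (u : CoprodI G) :
    ¬ IsOfFinOrder (u * w.prod * u⁻¹) := by
  intro h
  obtain ⟨n, hn, h1⟩ := isOfFinOrder_iff_pow_eq_one.mp h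
  obtain ⟨m, rfl⟩ := Nat.exists_eq_add_of_lt hn
  rw [conj_pow, mul_inv_eq_one] at h1
  obtain ⟨v, hv⟩ := pow_neword (Ne.symm hij) w m
  simp only [Nat.zero_add] at h1
  have h2 : u * w.prod ^ (m + 1) = u * 1 := by rw [mul_one, h1]
  exact neword_prod_ne_one v (hv.trans (mul_left_cancel h2))

def listProd (l : List (Σ i, G i)) : CoprodI G := (l.map fun x => CoprodI.of x.snd).prod

lemma word_prod_eq (w : Word G) : w.prod = listProd w.toList := rfl

lemma listProd_append (l₁ l₂ : List (Σ i, G i)) :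
    listProd (l₁ ++ l₂) = listProd l₁ * listProd l₂ := by simp [listProd]

lemma listProd_cons (a : (Σ i, G i)) (l : List (Σ i, G i)) :
    listProd (a :: l) = CoprodI.of a.snd * listProd l := by simp [listProd]

lemma listProd_singleton (a : (Σ i, G i)) : listProd [a] = CoprodI.of a.snd := by
  simp [listProd]

lemma listProd_nil : listProd ([] : List (Σ i, G i)) = 1 := rfl

/-- NeWord from a nonempty word, with identified endpoints. -/
lemma neword_of_toList {w : Word G} {a b : Σ i, G i} {L : List (Σ i, G i)}
    (h : w.toList = a :: L) (hb : w.toList.getLast? = some b) :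
    ∃ v : NeWord G a.1 b.1, v.toWord = w := by
  obtain ⟨i, j, v, hv⟩ := NeWord.of_word w (by
    intro he; rw [he] at h; simp at h)
  have h1 : w.toList.head? = some ⟨i, v.head⟩ := by rw [← hv]; exact v.toList_head?
  have h2 : w.toList.getLast? = some ⟨j, v.last⟩ := by rw [← hv]; exact v.toList_getLast?
  rw [h] at h1
  simp only [List.head?_cons, Option.some.injEq] at h1
  rw [hb] at h2
  obtain rfl : a = ⟨i, v.head⟩ := h1
  obtain rfl : b = ⟨j, v.last⟩ := by injection h2
  exact ⟨v, hv⟩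

/-- An element is a conjugate of a letter, or a conjugate of a cyclically reduced
word with distinct end summands. -/
def ConjForm (x : CoprodI G) : Prop :=
  (∃ (i : ι) (g : G i) (u : CoprodI G), x = u * CoprodI.of g * u⁻¹) ∨
  (∃ (i j : ι) (_ : i ≠ j) (v : NeWord G i j) (u : CoprodI G), x = u * v.prod * u⁻¹)

lemma ConjForm.conj {x : CoprodI G} (h : ConjForm x) (d : CoprodI G) :
    ConjForm (d * x * d⁻¹) := by
  rcases h with ⟨i, g, u, rfl⟩ | ⟨i, j, hij, v, u, rfl⟩
  · exact Or.inl ⟨i, g, d * u, by group⟩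
  · exact Or.inr ⟨i, j, hij, v, d * u, by group⟩

theorem word_conj_form [Nonempty ι] :
    ∀ (n : ℕ) (w : Word G), w.toList.length ≤ n → ConjForm w.prod := by
  intro n
  induction n with
  | zero =>
    intro w hw
    have h0 : w.toList = [] := List.eq_nil_of_length_eq_zero (Nat.le_zero.mp hw)
    exact Or.inl ⟨Classical.arbitrary ι, 1, 1, by simp [word_prod_eq, h0, listProd_nil]⟩
  | succ n ih =>
    intro w hw
    rcases hL : w.toList with _ | ⟨a, L⟩
    · exact Or.inl ⟨Classical.arbitrary ι, 1, 1, by simp [word_prod_eq, hL, listProd_nil]⟩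
    rcases eq_or_ne L [] with rfl | hLne
    · exact Or.inl ⟨a.1, a.2, 1, by simp [word_prod_eq, hL, listProd_singleton]⟩
    have hgl : w.toList.getLast? = some ((a :: L).getLast (by simp)) := by
      rw [hL]; exact List.getLast?_eq_getLast _
    obtain ⟨v, hv⟩ := neword_of_toList hL hgl
    by_cases hij : a.1 = ((a :: L).getLast (by simp)).1
    · -- surgery case
      obtain ⟨i, g⟩ := a
      rcases hb : (⟨i, g⟩ :: L).getLast (by simp) with ⟨j, t⟩
      rw [hb] at hij
      simp only at hij
      subst hij
      -- decompose L = M ++ [⟨i, t⟩]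
      have hbL : L.getLast hLne = ⟨i, t⟩ := by
        rw [← hb]; exact (List.getLast_cons hLne).symm
      have hdec : L = L.dropLast ++ [⟨i, t⟩] := by
        conv_lhs => rw [← List.dropLast_append_getLast hLne]
        rw [hbL]
      set M := L.dropLast with hM
      have hwl : w.toList = ⟨i, g⟩ :: (M ++ [⟨i, t⟩]) := by rw [hL]; congr 1
      have hprod : w.prod = CoprodI.of g * listProd M * CoprodI.of t := by
        rw [word_prod_eq, hwl, listProd_cons, listProd_append, listProd_singleton, mul_assoc]
      have hne1 : ∀ l ∈ M, Sigma.snd l ≠ 1 := by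
        intro l hl
        exact w.ne_one l (by rw [hwl]; exact List.mem_cons_of_mem _ (List.mem_append_left _ hl))
      have hchainM : List.IsChain (fun l l' : Σ i, G i => Sigma.fst l ≠ Sigma.fst l')
          (M ++ [⟨i, t⟩]) := by
        have := w.chain_ne
        rw [hwl] at this
        exact this.tail
      have hlen2 : w.toList.length = M.length + 2 := by rw [hwl]; simp
      by_cases htg : t * g = 1
      · -- shorter word M
        have hform : ConjForm (listProd M) := by
          have := ih ⟨M, hne1, (List.isChain_append.mp hchainM).1⟩
            (by show M.length ≤ n; omega)
          rwa [word_prod_eq] at this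
        have hti : CoprodI.of t = (CoprodI.of g)⁻¹ := by
          rw [eq_inv_iff_mul_eq_one, ← map_mul, htg, map_one]
        have heq : w.prod = CoprodI.of g * listProd M * (CoprodI.of g)⁻¹ := by
          rw [hprod, hti]
        rw [heq]
        exact hform.conj _
      · -- word M ++ [⟨i, t*g⟩]
        have hchainZ : List.IsChain (fun l l' : Σ i, G i => Sigma.fst l ≠ Sigma.fst l')
            (M ++ [⟨i, t * g⟩]) := by
          rw [List.isChain_append] at hchainM ⊢
          refine ⟨hchainM.1, List.isChain_singleton _, ?_⟩
          intro x hx y hy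
          simp only [List.head?_cons, Option.mem_def, Option.some.injEq] at hy
          subst hy
          exact hchainM.2.2 x hx ⟨i, t⟩ (by simp)
        have hne1Z : ∀ l ∈ M ++ [(⟨i, t * g⟩ : Σ i, G i)], Sigma.snd l ≠ 1 := by
          intro l hl
          rcases List.mem_append.mp hl with h | h
          · exact hne1 l h
          · simp only [List.mem_singleton] at h; subst h; exact htg
        have hform : ConjForm (listProd (M ++ [⟨i, t * g⟩])) := by
          have := ih ⟨M ++ [⟨i, t * g⟩], hne1Z, hchainZ⟩
            (by show (M ++ [(⟨i, t * g⟩ : Σ i, G i)]).length ≤ n; rw [List.length_append]; simp; omega)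
          rwa [word_prod_eq] at this
        have heq : w.prod =
            CoprodI.of g * listProd (M ++ [⟨i, t * g⟩]) * (CoprodI.of g)⁻¹ := by
          rw [hprod, listProd_append, listProd_singleton]
          show _ = _ * (_ * CoprodI.of (t * g)) * _
          rw [map_mul]
          group
        rw [heq]
        exact hform.conj _
    · -- distinct ends
      refine Or.inr ⟨a.1, _, hij, v, 1, ?_⟩
      rw [NeWord.prod, hv]
      group

theorem conj_form_of [Nonempty ι] (x : CoprodI G) : ConjForm x := by
  classical
  have h := word_conj_form (Word.equiv x).toList.length (Word.equiv x) le_rfl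
  rwa [show Word.prod (Word.equiv x) = x from Word.equiv.left_inv x] at h

lemma isOfFinOrder_conj {Γ : Type*} [Group Γ] (u x : Γ) :
    IsOfFinOrder (u * x * u⁻¹) ↔ IsOfFinOrder x := by
  constructor
  · intro h
    obtain ⟨n, hn, h1⟩ := isOfFinOrder_iff_pow_eq_one.mp h
    refine isOfFinOrder_iff_pow_eq_one.mpr ⟨n, hn, ?_⟩
    rw [conj_pow] at h1
    have := congrArg (fun z => u⁻¹ * z * u) h1
    simpa [mul_assoc] using this
  · intro h
    obtain ⟨n, hn, h1⟩ := isOfFinOrder_iff_pow_eq_one.mp h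
    exact isOfFinOrder_iff_pow_eq_one.mpr ⟨n, hn, by rw [conj_pow, h1]; group⟩

theorem reduce_conj :
    ∀ (n : ℕ) (w : Word G) {k : ι} (s : G k), s ≠ 1 → w.toList.length ≤ n →
    ∃ (k' : ι) (s' : G k') (v : Word G), s' ≠ 1 ∧
      (∀ l ∈ v.toList.getLast?, Sigma.fst l ≠ k') ∧
      w.prod * CoprodI.of s * w.prod⁻¹ = v.prod * CoprodI.of s' * v.prod⁻¹ := by
  intro n
  induction n with
  | zero =>
    intro w k s hs hw
    have h0 : w.toList = [] := List.eq_nil_of_length_eq_zero (Nat.le_zero.mp hw)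
    exact ⟨k, s, w, hs, by rw [h0]; simp, rfl⟩
  | succ n ih =>
    intro w k s hs hw
    rcases hL : w.toList.getLast? with _ | b
    · exact ⟨k, s, w, hs, by rw [hL]; simp, rfl⟩
    by_cases hbk : b.1 = k
    · obtain ⟨k', gl⟩ := b
      simp only at hbk
      subst hbk
      have hne : w.toList ≠ [] := by intro h; rw [h] at hL; simp at hL
      have hgl : w.toList.getLast hne = ⟨k', gl⟩ := by
        rw [List.getLast?_eq_getLast hne] at hL
        exact Option.some_injective _ hL
      have hdec : w.toList = w.toList.dropLast ++ [⟨k', gl⟩] := by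
        conv_lhs => rw [← List.dropLast_append_getLast hne]
        rw [hgl]
      set M := w.toList.dropLast with hM
      have hne1 : ∀ l ∈ M, Sigma.snd l ≠ 1 := fun l hl =>
        w.ne_one l (List.dropLast_sublist _ |>.mem hl)
      have hchainM : List.IsChain (fun l l' : Σ i, G i => Sigma.fst l ≠ Sigma.fst l') M := by
        have := w.chain_ne
        rw [hdec, List.isChain_append] at this
        exact this.1
      have hlen : M.length + 1 = w.toList.length := by
        conv_rhs => rw [hdec]
        simp
      have hprod : w.prod = listProd M * CoprodI.of gl := by
        rw [word_prod_eq, hdec, listProd_append, listProd_singleton]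
      have hs' : gl * s * gl⁻¹ ≠ 1 := by
        intro h
        apply hs
        have hss : s = gl⁻¹ * (gl * s * gl⁻¹) * gl := by group
        rw [hss, h]
        group
      obtain ⟨k'', s'', v, h1, h2, h3⟩ :=
        ih ⟨M, hne1, hchainM⟩ (gl * s * gl⁻¹) hs' (by show M.length ≤ n; omega)
      refine ⟨k'', s'', v, h1, h2, ?_⟩
      rw [hprod, ← h3]
      show listProd M * CoprodI.of gl * CoprodI.of s * (listProd M * CoprodI.of gl)⁻¹
          = listProd M * CoprodI.of (gl * s * gl⁻¹) * (listProd M)⁻¹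
      rw [map_mul, map_mul, map_inv]
      group
    · exact ⟨k, s, w, hs, by rw [hL]; simpa using hbk, rfl⟩

theorem key_lemma :
    ∀ (n : ℕ) (v : Word G) {i k : ι} (g₀ : G i) (_ : g₀ ≠ 1) (s : G k) (_ : s ≠ 1)
    (_ : ∀ l ∈ v.toList.getLast?, Sigma.fst l ≠ k) (_ : v.toList.length ≤ n)
    (_ : IsOfFinOrder (CoprodI.of g₀ * (v.prod * CoprodI.of s * v.prod⁻¹))),
    ∃ g : G i, v.prod * CoprodI.of s * v.prod⁻¹ = CoprodI.of g := by
  intro n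
  induction n with
  | zero =>
    intro v i k g₀ hg₀ s hs hv hlen hfin
    have h0 : v.toList = [] := List.eq_nil_of_length_eq_zero (Nat.le_zero.mp hlen)
    have hv1 : v.prod = 1 := by rw [word_prod_eq, h0, listProd_nil]
    rw [hv1]
    simp only [one_mul, inv_one, mul_one]
    by_cases hik : i = k
    · subst hik; exact ⟨s, rfl⟩
    · exfalso
      apply not_isOfFinOrder_conj_neword hik
        (NeWord.append (NeWord.singleton g₀ hg₀) hik (NeWord.singleton s hs)) 1
      rw [one_mul, inv_one, mul_one, NeWord.append_prod, NeWord.prod_singleton,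
        NeWord.prod_singleton]
      simpa [hv1] using hfin
  | succ n ih =>
    intro v i k g₀ hg₀ s hs hv hlen hfin
    rcases hL : v.toList with _ | ⟨a, L⟩
    · -- same as zero case
      have hv1 : v.prod = 1 := by rw [word_prod_eq, hL, listProd_nil]
      rw [hv1]
      simp only [one_mul, inv_one, mul_one]
      by_cases hik : i = k
      · subst hik; exact ⟨s, rfl⟩
      · exfalso
        apply not_isOfFinOrder_conj_neword hik
          (NeWord.append (NeWord.singleton g₀ hg₀) hik (NeWord.singleton s hs)) 1
        rw [one_mul, inv_one, mul_one, NeWord.append_prod, NeWord.prod_singleton,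
          NeWord.prod_singleton]
        simpa [hv1] using hfin
    by_cases hai : a.1 = i
    · -- peel off the first letter
      obtain ⟨i₁, g₁⟩ := a
      simp only at hai
      subst hai
      have hne1L : ∀ l ∈ L, Sigma.snd l ≠ 1 := fun l hl =>
        v.ne_one l (by rw [hL]; exact List.mem_cons_of_mem _ hl)
      have hchainL : List.Chain' (fun l l' : Σ i, G i => Sigma.fst l ≠ Sigma.fst l') L := by
        have := v.chain_ne; rw [hL] at this; exact this.tail
      set v' : Word G := ⟨L, hne1L, hchainL⟩ with hv'def
      have hvL : ∀ l ∈ v'.toList.getLast?, Sigma.fst l ≠ k := by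
        intro l hl
        apply hv
        rw [hL]
        exact List.mem_getLast?_cons hl
      have hvprod : v.prod = CoprodI.of g₁ * v'.prod := by
        rw [word_prod_eq, hL, listProd_cons]
        rfl
      have hconj : v.prod * CoprodI.of s * v.prod⁻¹ =
          CoprodI.of g₁ * (v'.prod * CoprodI.of s * v'.prod⁻¹) * (CoprodI.of g₁)⁻¹ := by
        rw [hvprod]; group
      have hg₀' : g₁⁻¹ * g₀ * g₁ ≠ 1 := by
        intro h
        apply hg₀
        have hgg : g₀ = g₁ * (g₁⁻¹ * g₀ * g₁) * g₁⁻¹ := by group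
        rw [hgg, h]; group
      have hfin' : IsOfFinOrder
          (CoprodI.of (g₁⁻¹ * g₀ * g₁) * (v'.prod * CoprodI.of s * v'.prod⁻¹)) := by
        have heq : CoprodI.of (g₁⁻¹ * g₀ * g₁) * (v'.prod * CoprodI.of s * v'.prod⁻¹) =
            (CoprodI.of g₁)⁻¹ *
              (CoprodI.of g₀ * (v.prod * CoprodI.of s * v.prod⁻¹)) * ((CoprodI.of g₁)⁻¹)⁻¹ := by
          rw [hconj, map_mul, map_mul, map_inv]
          group
        rw [heq, isOfFinOrder_conj]
        exact hfin
      have hlenL : L.length ≤ n := by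
        have : v.toList.length = L.length + 1 := by rw [hL]; simp
        omega
      obtain ⟨g'', hgg⟩ := ih v' (g₁⁻¹ * g₀ * g₁) hg₀' s hs hvL hlenL hfin'
      refine ⟨g₁ * g'' * g₁⁻¹, ?_⟩
      rw [hconj, hgg, map_mul, map_mul, map_inv]
    · -- first letter not in summand i : contradiction
      exfalso
      have hnil : v.toList ≠ [] := by rw [hL]; simp
      have hbsome : v.toList.getLast? = some (v.toList.getLast hnil) :=
        List.getLast?_eq_getLast hnil
      set b := v.toList.getLast hnil with hbdef
      have hbk : b.1 ≠ k := hv b (by rw [hbsome]; rfl)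
      obtain ⟨nv, hvw⟩ := neword_of_toList hL hbsome
      have hnv : nv.prod = v.prod := by rw [NeWord.prod, hvw]
      have hia : i ≠ a.1 := Ne.symm hai
      apply not_isOfFinOrder_conj_neword hia
        (NeWord.append (NeWord.append (NeWord.append (NeWord.singleton g₀ hg₀) hia nv) hbk
          (NeWord.singleton s hs)) (Ne.symm hbk) nv.inv) 1
      rw [one_mul, inv_one, mul_one]
      simp only [NeWord.append_prod, NeWord.prod_singleton, NeWord.inv_prod, hnv]
      have hassoc : CoprodI.of g₀ * v.prod * CoprodI.of s * v.prod⁻¹ =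
          CoprodI.of g₀ * (v.prod * CoprodI.of s * v.prod⁻¹) := by group
      rw [hassoc]
      exact hfin

/-- If `g ≠ 1` lies in the summand `G i` and `m`, `of g * m` both have finite order,
then `m` lies in the summand `G i`. -/
theorem mem_summand_of_finOrder {i : ι} (g : G i) (hg : g ≠ 1) (m : CoprodI G)
    (hm : IsOfFinOrder m) (hgm : IsOfFinOrder (CoprodI.of g * m)) :
    ∃ t : G i, m = CoprodI.of t := by
  classical
  have : Nonempty ι := ⟨i⟩
  by_cases hm1 : m = 1
  · exact ⟨1, by simp [hm1]⟩
  rcases conj_form_of (ι := ι) m with ⟨k, s, u, hu⟩ | ⟨i₁, j₁, hij, w, u, hu⟩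
  · have hs : s ≠ 1 := by
      intro h; apply hm1; rw [hu, h]; simp
    have hprodu : Word.prod (Word.equiv u) = u := Word.equiv.left_inv u
    obtain ⟨k', s', v, hs', hv, heq⟩ :=
      reduce_conj (Word.equiv u).toList.length (Word.equiv u) s hs le_rfl
    rw [hprodu] at heq
    rw [hu, heq] at hgm ⊢
    obtain ⟨t, ht⟩ := key_lemma v.toList.length v g hg s' hs' hv le_rfl hgm
    exact ⟨t, ht⟩
  · exact absurd hm (hu ▸ not_isOfFinOrder_conj_neword hij w u)

theorem coprodI_main [Nonempty ι] (p q r : CoprodI G)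
    (hgen : Subgroup.closure {p, q, r} = ⊤)
    (hp : IsOfFinOrder p) (hp1 : p ≠ 1) (hq : IsOfFinOrder q) (hr : IsOfFinOrder r)
    (hpq : IsOfFinOrder (p * q)) (hpr : IsOfFinOrder (p * r)) :
    ∃ i : ι, ∀ j : ι, j ≠ i → Subsingleton (G j) := by
  classical
  -- p is conjugate to a letter
  obtain ⟨i, g, u, hu⟩ : ∃ (i : ι) (g : G i) (u : CoprodI G), p = u * CoprodI.of g * u⁻¹ := by
    rcases conj_form_of (ι := ι) p with h | ⟨i₁, j₁, hij, w, u, hu⟩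
    · exact h
    · exact absurd hp (hu ▸ not_isOfFinOrder_conj_neword hij w u)
  have hg : g ≠ 1 := by
    intro h; apply hp1; rw [hu, h]; simp
  -- conjugate the generators
  set f := MulAut.conj u⁻¹ with hf
  have hfp : f p = CoprodI.of g := by
    simp [hf, MulAut.conj_apply, hu]; group
  have hfin : ∀ x : CoprodI G, IsOfFinOrder x → IsOfFinOrder (f x) := by
    intro x hx
    have : f x = u⁻¹ * x * (u⁻¹)⁻¹ := by simp [hf, MulAut.conj_apply]
    rw [this, isOfFinOrder_conj]
    exact hx
  have hq' := hfin q hq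
  have hr' := hfin r hr
  have hpq' : IsOfFinOrder (CoprodI.of g * f q) := by
    rw [← hfp, ← map_mul]; exact hfin _ hpq
  have hpr' : IsOfFinOrder (CoprodI.of g * f r) := by
    rw [← hfp, ← map_mul]; exact hfin _ hpr
  obtain ⟨t₁, ht₁⟩ := mem_summand_of_finOrder g hg (f q) hq' hpq'
  obtain ⟨t₂, ht₂⟩ := mem_summand_of_finOrder g hg (f r) hr' hpr'
  -- the images generate, hence everything is in the range of `of i`
  have htop : (CoprodI.of : G i →* CoprodI G).range = ⊤ := by
    rw [eq_top_iff]
    have hmap : Subgroup.map f.toMonoidHom (Subgroup.closure {p, q, r}) =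
        Subgroup.closure {f p, f q, f r} := by
      rw [MonoidHom.map_closure]
      congr 1
      simp [Set.image_insert_eq]
    have htop2 : Subgroup.closure {f p, f q, f r} = ⊤ := by
      rw [← hmap, hgen]
      exact Subgroup.map_top_of_surjective _ f.surjective
    rw [← htop2]
    apply (Subgroup.closure_le _).mpr
    intro x hx
    simp only [Set.mem_insert_iff, Set.mem_singleton_iff] at hx
    rcases hx with rfl | rfl | rfl
    · exact ⟨g, hfp.symm⟩
    · exact ⟨t₁, ht₁.symm⟩
    · exact ⟨t₂, ht₂.symm⟩
  refine ⟨i, fun j hj => ?_⟩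
  -- project to the summand `G j`
  set π := CoprodI.lift (Function.update (fun l => (1 : G l →* G j)) j (MonoidHom.id (G j)))
  have hπj : ∀ x : G j, π (CoprodI.of x) = x := by
    intro x
    rw [CoprodI.lift_of, Function.update_self]
    rfl
  have hπi : ∀ y : G i, π (CoprodI.of y) = 1 := by
    intro y
    rw [CoprodI.lift_of, Function.update_of_ne (Ne.symm hj)]
    rfl
  have hall : ∀ x : G j, x = 1 := by
    intro x
    obtain ⟨y, hy⟩ : CoprodI.of x ∈ (CoprodI.of : G i →* CoprodI G).range := by
      rw [htop]; trivial
    rw [← hπj x, ← hy, hπi]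
  exact ⟨fun a b => by rw [hall a, hall b]⟩


lemma closure_triple_map {Γ Δ : Type*} [Group Γ] [Group Δ] (f : Γ ≃* Δ) {x y z : Γ}
    (h : Subgroup.closure {x, y, z} = ⊤) : Subgroup.closure {f x, f y, f z} = ⊤ := by
  have hm := MonoidHom.map_closure f.toMonoidHom ({x, y, z} : Set Γ)
  rw [h, Subgroup.map_top_of_surjective _ f.surjective] at hm
  have himg : (f.toMonoidHom : Γ → Δ) '' {x, y, z} = {f x, f y, f z} := by
    simp [Set.image_insert_eq]
  rw [himg] at hm
  exact hm.symm

lemma subsingleton_of_ulift {α : Type*} (h : Subsingleton (ULift α)) : Subsingleton α :=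
  ⟨fun x y => congrArg ULift.down (@Subsingleton.elim _ h (ULift.up x) (ULift.up y))⟩

end FreeProductLemmas


section Bridge
universe u v
variable (G : Type u) (H : Type v) [Group G] [Group H]

/-- The two-element family of groups used to interpret `Coprod G H` as a `CoprodI`. -/
def BoolFam : Bool → Type (max u v) := fun b => cond b (ULift.{v} G) (ULift.{u} H)

instance : ∀ b, Group (BoolFam G H b) := fun b =>
  match b with
  | true => (inferInstance : Group (ULift G))
  | false => (inferInstance : Group (ULift H))

/-- Forward homomorphism. -/
def toCoprodI : Coprod G H →* CoprodI (BoolFam G H) :=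
  Coprod.lift
    ((CoprodI.of (i := true)).comp (MulEquiv.ulift.symm.toMonoidHom))
    ((CoprodI.of (i := false)).comp (MulEquiv.ulift.symm.toMonoidHom))

/-- Backward homomorphism. -/
def fromCoprodI : CoprodI (BoolFam G H) →* Coprod G H :=
  CoprodI.lift (fun b => Bool.rec
    (Coprod.inr.comp MulEquiv.ulift.toMonoidHom)
    (Coprod.inl.comp MulEquiv.ulift.toMonoidHom) b)

/-- `Coprod G H` is isomorphic to the `CoprodI` of the two-element family. -/
def coprodEquivCoprodI : Coprod G H ≃* CoprodI (BoolFam G H) :=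
  MonoidHom.toMulEquiv (toCoprodI G H) (fromCoprodI G H)
    (by
      apply Coprod.hom_ext <;> ext x <;>
        simp [toCoprodI, fromCoprodI, CoprodI.lift_of, MulEquiv.apply_symm_apply] <;> rfl)
    (by
      apply CoprodI.ext_hom
      intro b
      cases b <;> ext x <;>
        simp [toCoprodI, fromCoprodI, CoprodI.lift_of, MulEquiv.symm_apply_apply] <;> rfl)

end Bridge


/-- The relators a², abab⁻², acac⁻² in the free group on three generators a, b, c;
the presented group is S₃ *_{Z/2Z} S₃. -/
def piRels : Set (FreeGroup (Fin 3)) :=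
  {(FreeGroup.of 0) ^ 2,
   FreeGroup.of 0 * FreeGroup.of 1 * FreeGroup.of 0 * (FreeGroup.of 1)⁻¹ * (FreeGroup.of 1)⁻¹,
   FreeGroup.of 0 * FreeGroup.of 2 * FreeGroup.of 0 * (FreeGroup.of 2)⁻¹ * (FreeGroup.of 2)⁻¹}

/-- π = S₃ *_{Z/2Z} S₃ = ⟨a, b, c ∣ a², abab⁻², acac⁻²⟩. -/
abbrev piGroup := PresentedGroup piRels


namespace PiFacts

def a : piGroup := PresentedGroup.of 0
def b : piGroup := PresentedGroup.of 1
def c : piGroup := PresentedGroup.of 2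

lemma mk_rel : ∀ r ∈ piRels, (QuotientGroup.mk r : piGroup) = 1 := fun r hr =>
  (QuotientGroup.eq_one_iff r).mpr (Subgroup.subset_normalClosure hr)

lemma of_eq (x : Fin 3) :
    (PresentedGroup.of x : piGroup) = QuotientGroup.mk (FreeGroup.of x) := rfl

lemma haa : a * a = 1 := by
  rw [a, PresentedGroup.of, ← map_mul]
  apply mk_rel
  simp [piRels, pow_two]

lemma hrel2 : a * b * a * b⁻¹ * b⁻¹ = 1 := by
  rw [a, b, PresentedGroup.of, PresentedGroup.of, ← map_inv, ← map_mul,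
    ← map_mul, ← map_mul, ← map_mul]
  apply mk_rel
  simp [piRels]

lemma hrel3 : a * c * a * c⁻¹ * c⁻¹ = 1 := by
  rw [a, c, PresentedGroup.of, PresentedGroup.of, ← map_inv, ← map_mul,
    ← map_mul, ← map_mul, ← map_mul]
  apply mk_rel
  simp [piRels]

end PiFacts

section Derive
variable {Γ : Type*} [Group Γ] {x y : Γ}

lemma aba_eq (hx : x * x = 1) (hrel : x * y * x * y⁻¹ * y⁻¹ = 1) : x * y * x = y * y := by
  calc x * y * x = (x * y * x * y⁻¹ * y⁻¹) * (y * y) := by group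
  _ = 1 * (y * y) := by rw [hrel]
  _ = y * y := one_mul _

lemma cube_eq_one (hx : x * x = 1) (hrel : x * y * x * y⁻¹ * y⁻¹ = 1) : y * y * y = 1 := by
  have h1 := aba_eq hx hrel
  have hb4 : (y * y * y) * y = y := by
    calc (y * y * y) * y = (y * y) * (y * y) := by group
    _ = (x * y * x) * (x * y * x) := by rw [h1]
    _ = x * (y * (x * x) * y) * x := by group
    _ = x * (y * y) * x := by rw [hx]; group
    _ = x * (x * y * x) * x := by rw [h1]
    _ = (x * x) * y * (x * x) := by group
    _ = y := by rw [hx]; group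
  have : (y * y * y) * y = 1 * y := by rw [hb4, one_mul]
  exact mul_right_cancel this

lemma xy_sq_eq_one (hx : x * x = 1) (hrel : x * y * x * y⁻¹ * y⁻¹ = 1) :
    (x * y) * (x * y) = 1 := by
  calc (x * y) * (x * y) = (x * y * x) * y := by group
  _ = (y * y) * y := by rw [aba_eq hx hrel]
  _ = 1 := cube_eq_one hx hrel

end Derive

namespace PiFacts

def σ : Equiv.Perm (Fin 3) := Equiv.swap 0 1
def τ : Equiv.Perm (Fin 3) := finRotate 3

lemma rels_check1 : ∀ r ∈ piRels, FreeGroup.lift ![σ, τ, 1] r = 1 := by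
  intro r hr
  rcases hr with rfl | rfl | rfl <;>
    simp only [map_mul, map_inv, map_pow, FreeGroup.lift_apply_of] <;> decide

lemma rels_check2 : ∀ r ∈ piRels, FreeGroup.lift ![σ, 1, τ] r = 1 := by
  intro r hr
  rcases hr with rfl | rfl | rfl <;>
    simp only [map_mul, map_inv, map_pow, FreeGroup.lift_apply_of] <;> decide

def f1 : piGroup →* Equiv.Perm (Fin 3) := PresentedGroup.toGroup rels_check1
def f2 : piGroup →* Equiv.Perm (Fin 3) := PresentedGroup.toGroup rels_check2

lemma ha1 : a ≠ 1 := by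
  intro h
  have : f1 a = 1 := by rw [h, map_one]
  rw [a, f1, PresentedGroup.toGroup.of] at this
  revert this
  decide

lemma hb1 : b ≠ 1 := by
  intro h
  have : f1 b = 1 := by rw [h, map_one]
  rw [b, f1, PresentedGroup.toGroup.of] at this
  revert this
  decide

lemma hc1 : c ≠ 1 := by
  intro h
  have : f2 c = 1 := by rw [h, map_one]
  rw [c, f2, PresentedGroup.toGroup.of] at this
  revert this
  decide

lemma range_of : Set.range (PresentedGroup.of : Fin 3 → piGroup) = {a, b, c} := by
  ext x
  simp only [Set.mem_range, Set.mem_insert_iff, Set.mem_singleton_iff]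
  constructor
  · rintro ⟨i, rfl⟩
    fin_cases i
    · left; rfl
    · right; left; rfl
    · right; right; rfl
  · rintro (rfl | rfl | rfl)
    exacts [⟨0, rfl⟩, ⟨1, rfl⟩, ⟨2, rfl⟩]

lemma gen_abc : Subgroup.closure ({a, b, c} : Set piGroup) = ⊤ := by
  rw [← range_of]
  exact PresentedGroup.closure_range_of piRels

end PiFacts


/-- π = S₃ *_{Z/2Z} S₃ is indecomposable as a free product: if π ≅ G * H then
G or H is trivial. -/
theorem piGroup_indecomposable (G H : Type*) [Group G] [Group H]
    (h : Nonempty (piGroup ≃* Coprod G H)) :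
    Subsingleton G ∨ Subsingleton H := by
  obtain ⟨e⟩ := h
  set E := e.trans (coprodEquivCoprodI G H) with hE
  set p := E PiFacts.a with hp
  set q := E PiFacts.b with hq
  set r := E PiFacts.c with hr
  have hb3 : PiFacts.b * PiFacts.b * PiFacts.b = 1 := cube_eq_one PiFacts.haa PiFacts.hrel2
  have hc3 : PiFacts.c * PiFacts.c * PiFacts.c = 1 := cube_eq_one PiFacts.haa PiFacts.hrel3
  have hab2 : (PiFacts.a * PiFacts.b) * (PiFacts.a * PiFacts.b) = 1 :=
    xy_sq_eq_one PiFacts.haa PiFacts.hrel2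
  have hac2 : (PiFacts.a * PiFacts.c) * (PiFacts.a * PiFacts.c) = 1 :=
    xy_sq_eq_one PiFacts.haa PiFacts.hrel3
  have hfp : IsOfFinOrder p := isOfFinOrder_iff_pow_eq_one.mpr
    ⟨2, by norm_num, by rw [pow_two, hp, ← map_mul, PiFacts.haa, map_one]⟩
  have hfq : IsOfFinOrder q := isOfFinOrder_iff_pow_eq_one.mpr
    ⟨3, by norm_num, by
      rw [hq, ← map_pow,
        pow_three PiFacts.b, ← mul_assoc, hb3, map_one]⟩
  have hfr : IsOfFinOrder r := isOfFinOrder_iff_pow_eq_one.mpr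
    ⟨3, by norm_num, by
      rw [hr, ← map_pow,
        pow_three PiFacts.c, ← mul_assoc, hc3, map_one]⟩
  have hfpq : IsOfFinOrder (p * q) := isOfFinOrder_iff_pow_eq_one.mpr
    ⟨2, by norm_num, by rw [pow_two, hp, hq, ← map_mul, ← map_mul, hab2, map_one]⟩
  have hfpr : IsOfFinOrder (p * r) := isOfFinOrder_iff_pow_eq_one.mpr
    ⟨2, by norm_num, by rw [pow_two, hp, hr, ← map_mul, ← map_mul, hac2, map_one]⟩
  have hp1 : p ≠ 1 := by
    rw [hp]
    intro hcontra
    exact PiFacts.ha1 (E.injective (by rw [hcontra, map_one]))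
  have hgen : Subgroup.closure {p, q, r} = ⊤ := by
    rw [hp, hq, hr]
    exact closure_triple_map E PiFacts.gen_abc
  obtain ⟨i, hi⟩ := coprodI_main p q r hgen hfp hp1 hfq hfr hfpq hfpr
  cases i with
  | true =>
    right
    exact subsingleton_of_ulift (hi false (by simp))
  | false =>
    left
    exact subsingleton_of_ulift (hi true (by simp))
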